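/- arXiv:math/0606215 — 2 statements merged into one kernel-verified Lean document; each statement's English description precedes it below -/
import Mathlib

section
/- Let n ≥ 1 be an integer, let q be a real number with 0 < q < 1, and let ν, μ ∈ Λ_n be partitions with |μ| ≤ |ν| and μ ≠ ν. Then 𝔰_ν(q^{2(μ+δ)}; q²) = 0; equivalently, det( ∏_{m=0}^{ν_j+n−j−1} (q^{2(μ_i+n−i)} − q^{2m}) )_{1≤i,j≤n} = 0. -/
open BigOperators Finset

/-- The q-factorial Schur polynomial `𝔰_ν(x; q)` evaluated at a point
`x = (x_1, …, x_n)` (with pairwise distinct coordinates):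
`det( ∏_{m=0}^{ν_j+n−j−1} (x_i − q^m) ) / ∏_{i<j} (x_i − x_j)`.
Here indices are 0-based, so the number of factors in the `j`-th column
is `ν j + (n - 1 - j)`. -/
noncomputable def qfactSchur (n : ℕ) (q : ℝ) (ν : Fin n → ℕ) (x : Fin n → ℝ) : ℝ :=
  (Matrix.det (Matrix.of fun i j : Fin n =>
      ∏ m ∈ Finset.range (ν j + (n - 1 - (j : ℕ))), (x i - q ^ m))) /
    ∏ i : Fin n, ∏ j ∈ Finset.Ioi i, (x i - x j)

/-- The interpolation point `q^{2(μ+δ)} = (q^{2(μ_1+n−1)}, …, q^{2μ_n})`. -/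
noncomputable def qPoint (n : ℕ) (q : ℝ) (μ : Fin n → ℕ) : Fin n → ℝ :=
  fun i => q ^ (2 * (μ i + (n - 1 - (i : ℕ))))

/-- the extra vanishing property of q²-factorial Schur polynomials:
if `μ, ν ∈ Λ_n` are partitions with `|μ| ≤ |ν|` and `μ ≠ ν`, then
`𝔰_ν(q^{2(μ+δ)}; q²) = 0`; equivalently the defining determinant vanishes. -/
theorem qfactSchur_vanishing (n : ℕ) (hn : 1 ≤ n) (q : ℝ) (hq0 : 0 < q) (hq1 : q < 1)
    (ν μ : Fin n → ℕ) (hν : Antitone ν) (hμ : Antitone μ)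
    (hle : ∑ i, μ i ≤ ∑ i, ν i) (hne : μ ≠ ν) :
    qfactSchur n (q ^ 2) ν (qPoint n q μ) = 0 ∧
    Matrix.det (Matrix.of fun i j : Fin n =>
        ∏ m ∈ Finset.range (ν j + (n - 1 - (j : ℕ))), (qPoint n q μ i - (q ^ 2) ^ m)) = 0 := by
  -- Step 1: find an index r with μ r < ν r.
  have hr : ∃ r : Fin n, μ r < ν r := by
    by_contra h
    push_neg at h
    have hsum : ∑ i, ν i ≤ ∑ i, μ i := Finset.sum_le_sum fun i _ => h i
    have heq : ∑ i, ν i = ∑ i, μ i := le_antisymm hsum hle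
    have hall := (Finset.sum_eq_sum_iff_of_le (fun i _ => h i)).mp heq
    exact hne (funext fun i => (hall i (Finset.mem_univ i)).symm)
  obtain ⟨r, hrlt⟩ := hr
  -- Step 2: the determinant vanishes.
  have hdet : Matrix.det (Matrix.of fun i j : Fin n =>
        ∏ m ∈ Finset.range (ν j + (n - 1 - (j : ℕ))), (qPoint n q μ i - (q ^ 2) ^ m)) = 0 := by
    rw [Matrix.det_apply]
    simp only [Matrix.of_apply]
    apply Finset.sum_eq_zero
    intro σ _
    -- pigeonhole: some column j ≤ r is sent to a row σ j ≥ r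
    have hex : ∃ j : Fin n, j ≤ r ∧ r ≤ σ j := by
      by_contra h
      push_neg at h
      have hmaps : ∀ j ∈ Finset.Iic r, σ j ∈ Finset.Iio r := fun j hj =>
        Finset.mem_Iio.mpr (h j (Finset.mem_Iic.mp hj))
      have hcard : (Finset.Iio r).card < (Finset.Iic r).card := by
        rw [Fin.card_Iio, Fin.card_Iic]; omega
      obtain ⟨x, hx, y, hy, hxy, hEq⟩ :=
        Finset.exists_ne_map_eq_of_card_lt_of_maps_to hcard hmaps
      exact hxy (σ.injective hEq)
    obtain ⟨j, hjr, hrsj⟩ := hex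
    have hzero : ∏ m ∈ Finset.range (ν j + (n - 1 - (j : ℕ))),
        (qPoint n q μ (σ j) - (q ^ 2) ^ m) = 0 := by
      apply Finset.prod_eq_zero (i := μ (σ j) + (n - 1 - ((σ j : ℕ))))
      · have h1 : μ (σ j) ≤ μ r := hμ hrsj
        have h2 : ν r ≤ ν j := hν hjr
        have hc1 : (r : ℕ) ≤ (σ j : ℕ) := hrsj
        have hc2 : (j : ℕ) ≤ (r : ℕ) := hjr
        have h3 : ((σ j : ℕ)) < n := (σ j).isLt
        have h4 : (j : ℕ) < n := j.isLt
        rw [Finset.mem_range]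
        omega
      · simp only [qPoint]
        rw [pow_mul, sub_self]
    rw [Finset.prod_eq_zero (Finset.mem_univ j) hzero, smul_zero]
  refine ⟨?_, hdet⟩
  rw [qfactSchur]
  rw [show (Matrix.det (Matrix.of fun i j : Fin n =>
      ∏ m ∈ Finset.range (ν j + (n - 1 - (j : ℕ))), (qPoint n q μ i - (q ^ 2) ^ m))) = 0 from hdet]
  exact zero_div _
end

section
/- Let n ≥ 1 be an integer, let q be a real number with 0 < q < 1, and let ν ∈ Λ_n be a partition. Let S_ν denote the symmetric polynomial in n variables over ℝ of total degree |ν| satisfying S_ν(X) · ∏_{1≤i<j≤n} (X_i − X_j) = det( ∏_{m=0}^{ν_j+n−j−1} (X_i − (q²)^m) )_{1≤i,j≤n} in ℝ[X_1, …, X_n] (so that S_ν(x) = 𝔰_ν(x; q²) at points with pairwise distinct coordinates). If p is any symmetric polynomial in n variables over ℝ of total degree at most |ν| such that p(q^{2(μ+δ)}) = 0 for every partition μ ∈ Λ_n with |μ| ≤ |ν| and μ ≠ ν, then there exists a constant c ∈ ℝ with p = c · S_ν. In other words, 𝔰_ν(·; q²) is the unique symmetric polynomial of degree |ν|, up to a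 constant multiplier, vanishing at all the points q^{2(μ+δ)} with |μ| ≤ |ν| and μ ≠ ν. -/
open BigOperators Finset MvPolynomial

lemma qPoint_apply (n : ℕ) (q : ℝ) (μ : Fin n → ℕ) (i : Fin n) :
    qPoint n q μ i = q ^ (2 * (μ i + (n - 1 - (i : ℕ)))) := rfl

section helpers

lemma myEvalAeval {σ τ : Type*} (y : τ → ℝ) (s : σ → MvPolynomial τ ℝ) (f : MvPolynomial σ ℝ) :
    eval y (aeval s f) = eval (fun i => eval y (s i)) f := by
  induction f using MvPolynomial.induction_on with
  | C a => simp
  | add p q hp hq => simp only [map_add, hp, hq]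
  | mul_X p i hp => simp only [map_mul, aeval_X, eval_mul, eval_X, hp]

lemma myTotalDegreeAevalLe {σ τ : Type*} (s : σ → MvPolynomial τ ℝ)
    (hs : ∀ i, (s i).totalDegree ≤ 1)
    (f : MvPolynomial σ ℝ) : (aeval s f).totalDegree ≤ f.totalDegree := by
  conv_lhs => rw [f.as_sum]
  rw [map_sum]
  refine (MvPolynomial.totalDegree_finset_sum _ _).trans (Finset.sup_le fun u hu => ?_)
  rw [aeval_monomial]
  refine (MvPolynomial.totalDegree_mul _ _).trans ?_
  have h1 : (algebraMap ℝ (MvPolynomial τ ℝ) (coeff u f)).totalDegree = 0 := by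
    simp [MvPolynomial.algebraMap_eq, MvPolynomial.totalDegree_C]
  rw [h1, zero_add]
  refine le_trans ?_ (MvPolynomial.le_totalDegree hu)
  rw [Finsupp.prod]
  refine (MvPolynomial.totalDegree_finset_prod _ _).trans ?_
  have h2 : ∀ i ∈ u.support, ((s i) ^ (u i)).totalDegree ≤ u i := fun i _ =>
    (MvPolynomial.totalDegree_pow _ _).trans (by
      calc u i * (s i).totalDegree ≤ u i * 1 := Nat.mul_le_mul_left _ (hs i)
      _ = u i := Nat.mul_one _)
  calc ∑ i ∈ u.support, ((s i) ^ (u i)).totalDegree ≤ ∑ i ∈ u.support, u i :=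
        Finset.sum_le_sum h2
    _ = u.sum fun _ e => e := rfl

noncomputable def scaleT (n : ℕ) (c : ℝ) : MvPolynomial (Fin n) ℝ →ₐ[ℝ] MvPolynomial (Fin n) ℝ :=
  aeval (fun i => C c * X i)

variable {n : ℕ}

lemma scaleT_apply (c : ℝ) (f : MvPolynomial (Fin n) ℝ) :
    scaleT n c f = aeval (fun i => C c * X i) f := rfl

lemma scaleT_scaleT (c c' : ℝ) (f : MvPolynomial (Fin n) ℝ) :
    scaleT n c (scaleT n c' f) = scaleT n (c * c') f := by
  rw [scaleT_apply c, scaleT_apply, comp_aeval_apply, scaleT_apply]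
  have : (fun i : Fin n => (aeval fun i => C c * X i : MvPolynomial (Fin n) ℝ →ₐ[ℝ] _) (C c' * X i))
      = fun i : Fin n => C (c * c') * X i := by
    funext i
    simp only [map_mul, aeval_C, aeval_X, algebraMap_eq, C_mul]
    ring
  rw [this]

lemma scaleT_one (f : MvPolynomial (Fin n) ℝ) : scaleT n 1 f = f := by
  rw [scaleT_apply]
  simp only [map_one, one_mul]
  exact aeval_X_left_apply f

lemma scaleT_eq_zero {c : ℝ} (hc : c ≠ 0) {f : MvPolynomial (Fin n) ℝ}
    (h : scaleT n c f = 0) : f = 0 := by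
  have := congrArg (scaleT n c⁻¹) h
  rw [scaleT_scaleT, inv_mul_cancel₀ hc, scaleT_one, map_zero] at this
  exact this

lemma eval_scaleT (c : ℝ) (y : Fin n → ℝ) (f : MvPolynomial (Fin n) ℝ) :
    eval y (scaleT n c f) = eval (fun i => c * y i) f := by
  rw [scaleT, myEvalAeval]
  have : (fun i : Fin n => eval y (C c * X i)) = fun i => c * y i := by
    funext i; simp
  rw [this]

lemma rename_scaleT (e : Equiv.Perm (Fin n)) (c : ℝ) (f : MvPolynomial (Fin n) ℝ) :
    rename e (scaleT n c f) = scaleT n c (rename e f) := by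
  rw [scaleT, comp_aeval_apply, aeval_rename]
  have : (fun i : Fin n => (rename (e : Fin n → Fin n)) (C c * X i))
      = (fun i : Fin n => C c * X i) ∘ e := by
    funext i; simp
  rw [this]

lemma scaleT_symm (c : ℝ) {f : MvPolynomial (Fin n) ℝ} (hf : f.IsSymmetric) :
    (scaleT n c f).IsSymmetric := by
  intro e
  rw [rename_scaleT, hf e]

lemma totalDegree_scaleT_le (c : ℝ) (f : MvPolynomial (Fin n) ℝ) :
    (scaleT n c f).totalDegree ≤ f.totalDegree := by
  refine myTotalDegreeAevalLe _ (fun i => ?_) f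
  refine (totalDegree_mul _ _).trans ?_
  simp [totalDegree_C, totalDegree_X]

lemma myDvdSubUpdate (j : Fin n) (f : MvPolynomial (Fin n) ℝ) :
    (X j - 1) ∣ (f - aeval (Function.update X j (1 : MvPolynomial (Fin n) ℝ)) f) := by
  induction f using MvPolynomial.induction_on with
  | C a => simp [aeval_C, algebraMap_eq]
  | add p q hp hq =>
      have : p + q - aeval (Function.update X j 1) (p + q)
          = (p - aeval (Function.update X j 1) p) + (q - aeval (Function.update X j 1) q) := by
        rw [map_add]; ring
      rw [this]; exact dvd_add hp hq
  | mul_X p i hp =>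
      have key : p * X i - aeval (Function.update X j 1) (p * X i)
          = (p - aeval (Function.update X j 1) p) * X i
            + aeval (Function.update X j 1) p *
              (X i - Function.update X j (1 : MvPolynomial (Fin n) ℝ) i) := by
        rw [map_mul, aeval_X]; ring
      rw [key]
      refine dvd_add (Dvd.dvd.mul_right hp _) (Dvd.dvd.mul_left ?_ _)
      by_cases h : i = j
      · subst h; rw [Function.update_self]
      · rw [Function.update_of_ne h]; simp

lemma myXsub1_ne (i : Fin n) : (X i - 1 : MvPolynomial (Fin n) ℝ) ≠ 0 := by
  intro h
  have := congrArg (eval (fun _ => (0:ℝ))) h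
  simp at this

lemma myDegMul (i : Fin n) {u : MvPolynomial (Fin n) ℝ} (hu : u ≠ 0) :
    (X i - 1) * u ≠ 0 ∧ u.totalDegree + 1 ≤ ((X i - 1) * u).totalDegree := by
  have hne : (X i - 1) * u ≠ 0 := mul_ne_zero (myXsub1_ne i) hu
  refine ⟨hne, ?_⟩
  obtain ⟨w, hw, hwd⟩ : ∃ w ∈ u.support, w.sum (fun _ e => e) = u.totalDegree := by
    have hne' : u.support.Nonempty := MvPolynomial.support_nonempty.mpr hu
    obtain ⟨w, hw, hwd⟩ := Finset.exists_mem_eq_sup u.support hne' (fun w => w.sum fun _ e => e)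
    exact ⟨w, hw, hwd.symm⟩
  set w' : (Fin n) →₀ ℕ := Finsupp.single i 1 + w with hw'
  have hsum : (w'.sum fun _ e => e) = 1 + (w.sum fun _ e => e) := by
    rw [hw', Finsupp.sum_add_index' (fun _ => rfl) (fun _ _ _ => rfl)]
    rw [Finsupp.sum_single_index rfl]
  have hcoeff : coeff w' ((X i - 1) * u) = coeff w u := by
    rw [sub_mul, one_mul, coeff_sub, hw', coeff_X_mul]
    have h0 : coeff (Finsupp.single i 1 + w) u = 0 := by
      apply coeff_eq_zero_of_totalDegree_lt
      have : ((Finsupp.single i 1 + w).sum fun _ e => e) = 1 + (w.sum fun _ e => e) := by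
        rw [← hw']; exact hsum
      calc u.totalDegree < 1 + (w.sum fun _ e => e) := by omega
      _ = _ := by rw [← this]; rfl
    rw [h0, sub_zero]
  have hmem : w' ∈ ((X i - 1) * u).support := by
    rw [MvPolynomial.mem_support_iff, hcoeff]
    exact MvPolynomial.mem_support_iff.mp hw
  have hle := MvPolynomial.le_totalDegree hmem
  calc u.totalDegree + 1 = w'.sum fun _ e => e := by rw [hsum, hwd]; omega
  _ ≤ _ := hle

lemma myDegProd (s : Finset (Fin n)) {u : MvPolynomial (Fin n) ℝ} (hu : u ≠ 0) :
    (∏ i ∈ s, (X i - 1)) * u ≠ 0 ∧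
      s.card + u.totalDegree ≤ ((∏ i ∈ s, (X i - 1)) * u).totalDegree := by
  induction s using Finset.induction_on generalizing u with
  | empty => simpa using hu
  | @insert j s hj ih =>
      have h1 := myDegMul j hu
      have h2 := ih h1.1
      rw [Finset.prod_insert hj]
      have hre : ((X j - 1) * ((∏ i ∈ s, (X i - 1)) * u))
          = (∏ i ∈ s, (X i - 1)) * ((X j - 1) * u) := by ring
      constructor
      · rw [mul_assoc, hre]; exact h2.1
      · rw [mul_assoc, hre, Finset.card_insert_of_notMem hj]
        calc s.card + 1 + u.totalDegree = s.card + (u.totalDegree + 1) := by ring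
        _ ≤ s.card + ((X j - 1) * u).totalDegree := Nat.add_le_add_left h1.2 _
        _ ≤ _ := h2.2

end helpers

section det
variable {n : ℕ} {q : ℝ}

lemma myFactorZero (q : ℝ) (e : ℕ) : q ^ (2 * e) - ((q ^ 2) ^ e) = 0 := by
  rw [← pow_mul]; ring

lemma myEntryZero {a b : ℕ} (hab : a < b) :
    ∏ m ∈ Finset.range b, (q ^ (2 * a) - (q ^ 2) ^ m) = 0 :=
  Finset.prod_eq_zero (Finset.mem_range.mpr hab) (myFactorZero q a)

lemma myDetVanish (μ ν : Fin n → ℕ) (hμ : Antitone μ) (hν : Antitone ν)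
    (k : Fin n) (hk : μ k < ν k) :
    Matrix.det (Matrix.of fun i j : Fin n =>
      ∏ m ∈ Finset.range (ν j + (n - 1 - (j : ℕ))), (qPoint n q μ i - (q ^ 2) ^ m)) = 0 := by
  rw [Matrix.det_apply]
  refine Finset.sum_eq_zero fun σ _ => ?_
  have hex : ∃ j : Fin n, j ≤ k ∧ k ≤ σ j := by
    by_contra hcon
    push_neg at hcon
    have hmap : ∀ x ∈ Finset.Iic k, σ x ∈ Finset.Iio k := by
      intro x hx
      exact Finset.mem_Iio.mpr (hcon x (Finset.mem_Iic.mp hx))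
    have hcard := Finset.card_le_card_of_injOn σ hmap (σ.injective.injOn)
    rw [Fin.card_Iic, Fin.card_Iio] at hcard
    omega
  obtain ⟨j, hjk, hkσ⟩ := hex
  have hzero : (Matrix.of fun i j : Fin n =>
      ∏ m ∈ Finset.range (ν j + (n - 1 - (j : ℕ))), (qPoint n q μ i - (q ^ 2) ^ m)) (σ j) j
        = 0 := by
    show ∏ m ∈ Finset.range (ν j + (n - 1 - (j : ℕ))),
      (qPoint n q μ (σ j) - (q ^ 2) ^ m) = 0
    have h1 : (k : ℕ) ≤ ((σ j : Fin n) : ℕ) := hkσ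
    have h2 : ((j : Fin n) : ℕ) ≤ (k : ℕ) := hjk
    have h3 : μ (σ j) ≤ μ k := hμ hkσ
    have h4 : ν k ≤ ν j := hν hjk
    have h5 : (k : ℕ) < n := k.isLt
    have h6 : ((σ j : Fin n) : ℕ) < n := (σ j).isLt
    have hab : μ (σ j) + (n - 1 - ((σ j : Fin n) : ℕ)) < ν j + (n - 1 - ((j : Fin n) : ℕ)) := by
      omega
    exact myEntryZero hab
  have hprod : (∏ i : Fin n, (Matrix.of fun i j : Fin n =>
      ∏ m ∈ Finset.range (ν j + (n - 1 - (j : ℕ))), (qPoint n q μ i - (q ^ 2) ^ m)) (σ i) i)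
        = 0 :=
    Finset.prod_eq_zero (Finset.mem_univ j) hzero
  rw [hprod, smul_zero]

lemma myDetNonzero (hq0 : 0 < q) (hq1 : q < 1) (ν : Fin n → ℕ) (hν : Antitone ν) :
    Matrix.det (Matrix.of fun i j : Fin n =>
      ∏ m ∈ Finset.range (ν j + (n - 1 - (j : ℕ))), (qPoint n q ν i - (q ^ 2) ^ m)) ≠ 0 := by
  have htri : Matrix.BlockTriangular (Matrix.of fun i j : Fin n =>
      ∏ m ∈ Finset.range (ν j + (n - 1 - (j : ℕ))), (qPoint n q ν i - (q ^ 2) ^ m)) id := by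
    intro i j hji
    show ∏ m ∈ Finset.range (ν j + (n - 1 - (j : ℕ))), (qPoint n q ν i - (q ^ 2) ^ m) = 0
    have h1 : ν i ≤ ν j := hν (le_of_lt hji)
    have h2 : ((j : Fin n) : ℕ) < ((i : Fin n) : ℕ) := hji
    have h5 : (i : ℕ) < n := i.isLt
    have hab : ν i + (n - 1 - ((i : Fin n) : ℕ)) < ν j + (n - 1 - ((j : Fin n) : ℕ)) := by omega
    exact myEntryZero hab
  rw [Matrix.det_of_upperTriangular htri]
  refine Finset.prod_ne_zero_iff.mpr fun i _ => ?_
  show ∏ m ∈ Finset.range (ν i + (n - 1 - (i : ℕ))), (qPoint n q ν i - (q ^ 2) ^ m) ≠ 0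
  refine Finset.prod_ne_zero_iff.mpr fun m hm => ?_
  have hm' : m < ν i + (n - 1 - (i : ℕ)) := Finset.mem_range.mp hm
  have hlt : q ^ (2 * (ν i + (n - 1 - (i : ℕ)))) < q ^ (2 * m) :=
    pow_lt_pow_right_of_lt_one₀ hq0 hq1 (by omega)
  rw [qPoint, ← pow_mul]
  intro hcontra
  rw [sub_eq_zero] at hcontra
  rw [hcontra] at hlt
  exact lt_irrefl _ hlt

lemma myVandNe (hq0 : 0 < q) (hq1 : q < 1) (μ : Fin n → ℕ) (hμ : Antitone μ) :
    (∏ i : Fin n, ∏ j ∈ Finset.Ioi i, (qPoint n q μ i - qPoint n q μ j)) ≠ 0 := by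
  refine Finset.prod_ne_zero_iff.mpr fun i _ => Finset.prod_ne_zero_iff.mpr fun j hj => ?_
  have hij : i < j := Finset.mem_Ioi.mp hj
  have h1 : μ j ≤ μ i := hμ (le_of_lt hij)
  have h2 : ((i : Fin n) : ℕ) < ((j : Fin n) : ℕ) := hij
  have h5 : (j : ℕ) < n := j.isLt
  have hlt : q ^ (2 * (μ i + (n - 1 - (i : ℕ)))) < q ^ (2 * (μ j + (n - 1 - (j : ℕ)))) :=
    pow_lt_pow_right_of_lt_one₀ hq0 hq1 (by omega)
  rw [qPoint]
  intro hcontra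
  rw [sub_eq_zero] at hcontra
  rw [hcontra] at hlt
  exact lt_irrefl _ hlt

end det

lemma myBase (q : ℝ) (d : ℕ) (f : MvPolynomial (Fin 0) ℝ)
    (hvan : ∀ μ : Fin 0 → ℕ, Antitone μ → ∑ i, μ i ≤ d → eval (qPoint 0 q μ) f = 0) :
    f = 0 := by
  have h0 := hvan (fun _ => 0) (by intro a b _; exact a.elim0) (by simp)
  rw [MvPolynomial.eq_C_of_isEmpty f] at h0 ⊢
  rw [eval_C] at h0
  rw [h0, map_zero]

lemma myKey (q : ℝ) (hq0 : 0 < q) (hq1 : q < 1) (N : ℕ) :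
    ∀ (n d : ℕ) (f : MvPolynomial (Fin n) ℝ), n + d ≤ N → f.IsSymmetric →
      f.totalDegree ≤ d →
      (∀ μ : Fin n → ℕ, Antitone μ → ∑ i, μ i ≤ d → eval (qPoint n q μ) f = 0) →
      f = 0 := by
  induction N with
  | zero =>
      intro n d f hN hsym hdeg hvan
      have hn0 : n = 0 := by omega
      subst hn0
      exact myBase q d f hvan
  | succ N ih =>
      intro n
      match n with
      | 0 =>
        intro d f hN hsym hdeg hvan
        exact myBase q d f hvan
      | (m+1) =>
        intro d f hN hsym hdeg hvan
        -- Step A: restrict the last variable to 1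
        set g : MvPolynomial (Fin m) ℝ := aeval (Fin.snoc X 1) f with hg
        have hsnocdeg : ∀ i : Fin (m+1),
            ((Fin.snoc X 1 : Fin (m+1) → MvPolynomial (Fin m) ℝ) i).totalDegree ≤ 1 := by
          intro i
          cases i using Fin.lastCases with
          | last => rw [Fin.snoc_last]; simp
          | cast i => rw [Fin.snoc_castSucc]; simp [totalDegree_X]
        have hgsym : g.IsSymmetric := by
          intro e
          let e' : Equiv.Perm (Fin (m+1)) :=
            (finSuccEquivLast.trans e.optionCongr).trans finSuccEquivLast.symm
          have he'c : ∀ i : Fin m, e' (Fin.castSucc i) = Fin.castSucc (e i) := by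
            intro i; simp [e']
          have he'l : e' (Fin.last m) = Fin.last m := by simp [e']
          have h2 : (fun i : Fin (m+1) =>
              rename (e : Fin m → Fin m) ((Fin.snoc X 1 : Fin (m+1) → MvPolynomial (Fin m) ℝ) i))
              = (Fin.snoc X 1 : Fin (m+1) → MvPolynomial (Fin m) ℝ) ∘ e' := by
            funext i
            cases i using Fin.lastCases with
            | last => simp [he'l, Fin.snoc_last]
            | cast i => simp [he'c, Fin.snoc_castSucc]
          calc rename e g
              = aeval (fun i : Fin (m+1) =>
                  rename (e : Fin m → Fin m)
                    ((Fin.snoc X 1 : Fin (m+1) → MvPolynomial (Fin m) ℝ) i)) f := by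
                rw [hg]; exact comp_aeval_apply _ _ f
            _ = aeval ((Fin.snoc X 1 : Fin (m+1) → MvPolynomial (Fin m) ℝ) ∘ e') f := by rw [h2]
            _ = aeval (Fin.snoc X 1) (rename e' f) := by rw [aeval_rename]
            _ = g := by rw [hsym e', hg]
        have hgdeg : g.totalDegree ≤ d :=
          le_trans (myTotalDegreeAevalLe _ hsnocdeg f) hdeg
        -- the restricted polynomial vanishes
        have hgz : g = 0 := by
          have hvan2 : ∀ μ' : Fin m → ℕ, Antitone μ' → ∑ i, μ' i ≤ d →
              eval (qPoint m q μ') (scaleT m (q^2) g) = 0 := by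
            intro μ' hμ' hsum'
            rw [eval_scaleT, hg, myEvalAeval]
            have hpt : (fun i : Fin (m+1) =>
                eval (fun i => q^2 * qPoint m q μ' i)
                  ((Fin.snoc X 1 : Fin (m+1) → MvPolynomial (Fin m) ℝ) i))
                = qPoint (m+1) q (Fin.snoc μ' 0) := by
              funext i
              cases i using Fin.lastCases with
              | last =>
                  rw [Fin.snoc_last, map_one, qPoint_apply]
                  have h1 : (Fin.snoc μ' 0 : Fin (m+1) → ℕ) (Fin.last m) = 0 := Fin.snoc_last _ _
                  rw [h1]
                  have hlast : ((Fin.last m : Fin (m+1)) : ℕ) = m := rfl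
                  rw [hlast]
                  have h2 : 2 * (0 + (m + 1 - 1 - m)) = 0 := by omega
                  rw [h2, pow_zero]
              | cast i =>
                  rw [Fin.snoc_castSucc, eval_X, qPoint_apply, qPoint_apply]
                  have h1 : (Fin.snoc μ' 0 : Fin (m+1) → ℕ) (Fin.castSucc i) = μ' i :=
                    Fin.snoc_castSucc _ _ _
                  rw [h1, Fin.coe_castSucc]
                  have hi := i.isLt
                  have h2 : 2 * (μ' i + (m + 1 - 1 - (i : ℕ)))
                      = 2 + 2 * (μ' i + (m - 1 - (i : ℕ))) := by omega
                  rw [h2, pow_add]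
            rw [hpt]
            have hanti : Antitone (Fin.snoc μ' 0 : Fin (m+1) → ℕ) := by
              intro a b hab
              cases b using Fin.lastCases with
              | last =>
                  rw [Fin.snoc_last]
                  exact Nat.zero_le _
              | cast j =>
                  cases a using Fin.lastCases with
                  | last => exact absurd hab (Fin.castSucc_lt_last j).not_ge
                  | cast i =>
                      rw [Fin.snoc_castSucc, Fin.snoc_castSucc]
                      exact hμ' (Fin.castSucc_le_castSucc_iff.mp hab)
            have hsum2 : ∑ i : Fin (m+1), (Fin.snoc μ' 0 : Fin (m+1) → ℕ) i ≤ d := by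
              rw [Fin.sum_univ_castSucc]
              simp only [Fin.snoc_castSucc, Fin.snoc_last, add_zero]
              exact hsum'
            exact hvan _ hanti hsum2
          have hh := ih m d (scaleT m (q^2) g) (by omega) (scaleT_symm _ hgsym)
            (le_trans (totalDegree_scaleT_le _ _) hgdeg) hvan2
          exact scaleT_eq_zero (by positivity) hh
        -- Step B: divisibility by ∏ (X i - 1)
        have h3 : (fun i : Fin (m+1) =>
            rename (Fin.castSucc : Fin m → Fin (m+1))
              ((Fin.snoc X 1 : Fin (m+1) → MvPolynomial (Fin m) ℝ) i))
            = Function.update X (Fin.last m) (1 : MvPolynomial (Fin (m+1)) ℝ) := by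
          funext i
          cases i using Fin.lastCases with
          | last => rw [Fin.snoc_last, map_one, Function.update_self]
          | cast i =>
              rw [Fin.snoc_castSucc, rename_X,
                Function.update_of_ne (Fin.castSucc_lt_last i).ne]
        have hlast : aeval (Function.update X (Fin.last m) (1 : MvPolynomial (Fin (m+1)) ℝ)) f
            = 0 := by
          calc aeval (Function.update X (Fin.last m) (1 : MvPolynomial (Fin (m+1)) ℝ)) f
              = aeval (fun i : Fin (m+1) =>
                  rename (Fin.castSucc : Fin m → Fin (m+1))
                    ((Fin.snoc X 1 : Fin (m+1) → MvPolynomial (Fin m) ℝ) i)) f := by rw [h3]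
            _ = rename (Fin.castSucc : Fin m → Fin (m+1)) (aeval (Fin.snoc X 1) f) :=
                (comp_aeval_apply _ _ f).symm
            _ = 0 := by rw [← hg, hgz, map_zero]
        have hupd : ∀ j : Fin (m+1),
            aeval (Function.update X j (1 : MvPolynomial (Fin (m+1)) ℝ)) f = 0 := by
          intro j
          by_cases hj : j = Fin.last m
          · rw [hj]; exact hlast
          · have h4 : (fun i : Fin (m+1) =>
                rename (Equiv.swap j (Fin.last m) : Fin (m+1) → Fin (m+1))
                  (Function.update X (Fin.last m) (1 : MvPolynomial (Fin (m+1)) ℝ) i))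
                = (Function.update X j (1 : MvPolynomial (Fin (m+1)) ℝ))
                    ∘ (Equiv.swap j (Fin.last m)) := by
              funext i
              by_cases hi1 : i = Fin.last m
              · subst hi1
                simp only [Function.comp_apply]
                rw [Function.update_self, map_one, Equiv.swap_apply_right,
                  Function.update_self]
              · by_cases hi2 : i = j
                · subst hi2
                  simp only [Function.comp_apply]
                  rw [Equiv.swap_apply_left, Function.update_of_ne hj, rename_X,
                    Equiv.swap_apply_left, Function.update_of_ne (Ne.symm hj)]
                · simp only [Function.comp_apply]
                  rw [Function.update_of_ne hi1, rename_X,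
                    Equiv.swap_apply_of_ne_of_ne hi2 hi1,
                    Function.update_of_ne hi2]
            calc aeval (Function.update X j (1 : MvPolynomial (Fin (m+1)) ℝ)) f
                = aeval (Function.update X j (1 : MvPolynomial (Fin (m+1)) ℝ))
                    (rename (Equiv.swap j (Fin.last m) : Fin (m+1) → Fin (m+1)) f) := by
                  rw [hsym (Equiv.swap j (Fin.last m))]
              _ = aeval ((Function.update X j (1 : MvPolynomial (Fin (m+1)) ℝ))
                    ∘ (Equiv.swap j (Fin.last m))) f := by rw [aeval_rename]
              _ = aeval (fun i : Fin (m+1) =>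
                    rename (Equiv.swap j (Fin.last m) : Fin (m+1) → Fin (m+1))
                      (Function.update X (Fin.last m) (1 : MvPolynomial (Fin (m+1)) ℝ) i)) f := by
                  rw [h4]
              _ = rename (Equiv.swap j (Fin.last m) : Fin (m+1) → Fin (m+1))
                    (aeval (Function.update X (Fin.last m) (1 : MvPolynomial (Fin (m+1)) ℝ)) f) :=
                  (comp_aeval_apply _ _ f).symm
              _ = 0 := by rw [hlast, map_zero]
        have hdvd : ∀ s : Finset (Fin (m+1)),
            (∏ i ∈ s, (X i - 1 : MvPolynomial (Fin (m+1)) ℝ)) ∣ f := by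
          intro s
          induction s using Finset.induction_on with
          | empty => simpa using dvd_refl f
          | @insert j s hj ihs =>
              obtain ⟨u, hu⟩ := ihs
              have h5 : aeval (Function.update X j (1 : MvPolynomial (Fin (m+1)) ℝ)) f
                  = (∏ i ∈ s, (X i - 1))
                    * aeval (Function.update X j (1 : MvPolynomial (Fin (m+1)) ℝ)) u := by
                rw [hu, map_mul, map_prod]
                congr 1
                refine Finset.prod_congr rfl fun i hi => ?_
                have hij : i ≠ j := fun h => hj (h ▸ hi)
                rw [map_sub, aeval_X, Function.update_of_ne hij, map_one]
              have h6 : (∏ i ∈ s, (X i - 1 : MvPolynomial (Fin (m+1)) ℝ)) ≠ 0 :=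
                Finset.prod_ne_zero_iff.mpr fun i _ => myXsub1_ne i
              have h7 : aeval (Function.update X j (1 : MvPolynomial (Fin (m+1)) ℝ)) u = 0 := by
                have h8 := hupd j
                rw [h5] at h8
                exact (mul_eq_zero.mp h8).resolve_left h6
              have h9 : (X j - 1 : MvPolynomial (Fin (m+1)) ℝ) ∣ u := by
                have h10 := myDvdSubUpdate j u
                rwa [h7, sub_zero] at h10
              obtain ⟨v, hv⟩ := h9
              exact ⟨v, by rw [Finset.prod_insert hj, hu, hv]; ring⟩
        obtain ⟨f₁, hf₁⟩ := hdvd Finset.univ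
        by_cases hf1z : f₁ = 0
        · rw [hf₁, hf1z, mul_zero]
        exfalso
        have hprodne : (∏ i : Fin (m+1), (X i - 1 : MvPolynomial (Fin (m+1)) ℝ)) ≠ 0 :=
          Finset.prod_ne_zero_iff.mpr fun i _ => myXsub1_ne i
        have hdp := myDegProd Finset.univ hf1z
        have hd1 : (m+1) + f₁.totalDegree ≤ d := by
          have h11 := hdp.2
          rw [← hf₁] at h11
          have h12 : (Finset.univ : Finset (Fin (m+1))).card = m + 1 := by
            simp
          rw [h12] at h11
          exact le_trans h11 hdeg
        have hf1sym : f₁.IsSymmetric := by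
          intro e
          have hP : rename (e : Fin (m+1) → Fin (m+1))
              (∏ i : Fin (m+1), (X i - 1 : MvPolynomial (Fin (m+1)) ℝ)) = ∏ i, (X i - 1) := by
            rw [map_prod]
            simp only [map_sub, rename_X, map_one]
            exact Equiv.prod_comp e (fun i => (X i - 1 : MvPolynomial (Fin (m+1)) ℝ))
          have h13 := hsym e
          rw [hf₁, map_mul, hP] at h13
          exact mul_left_cancel₀ hprodne h13
        have hvan3 : ∀ lam : Fin (m+1) → ℕ, Antitone lam → ∑ i, lam i ≤ d - (m+1) →
            eval (qPoint (m+1) q lam) (scaleT (m+1) (q^2) f₁) = 0 := by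
          intro lam hlam hsuml
          rw [eval_scaleT]
          have hpt2 : (fun i => q^2 * qPoint (m+1) q lam i)
              = qPoint (m+1) q (fun i => lam i + 1) := by
            funext i
            rw [qPoint_apply, qPoint_apply]
            have h2 : 2 * (lam i + 1 + (m + 1 - 1 - (i : ℕ)))
                = 2 + 2 * (lam i + (m + 1 - 1 - (i : ℕ))) := by omega
            rw [h2, pow_add]
          rw [hpt2]
          have hμ1 : Antitone (fun i => lam i + 1) := fun a b h =>
            Nat.add_le_add_right (hlam h) 1
          have hsum1 : ∑ i : Fin (m+1), (lam i + 1) ≤ d := by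
            rw [Finset.sum_add_distrib]
            simp only [Finset.sum_const, Finset.card_univ, Fintype.card_fin, smul_eq_mul, mul_one]
            omega
          have h0 := hvan (fun i => lam i + 1) hμ1 hsum1
          rw [hf₁, map_mul] at h0
          have hpne : eval (qPoint (m+1) q (fun i => lam i + 1))
              (∏ i : Fin (m+1), (X i - 1 : MvPolynomial (Fin (m+1)) ℝ)) ≠ 0 := by
            rw [map_prod]
            refine Finset.prod_ne_zero_iff.mpr fun i _ => ?_
            rw [map_sub, eval_X, map_one]
            have hlt1 : qPoint (m+1) q (fun i => lam i + 1) i < 1 := by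
              rw [qPoint_apply]
              exact pow_lt_one₀ (le_of_lt hq0) hq1 (by omega)
            intro hc
            rw [sub_eq_zero] at hc
            rw [hc] at hlt1
            exact lt_irrefl _ hlt1
          exact (mul_eq_zero.mp h0).resolve_left hpne
        have hf2 := ih (m+1) (d - (m+1)) (scaleT (m+1) (q^2) f₁) (by omega)
          (scaleT_symm _ hf1sym)
          (le_trans (totalDegree_scaleT_le _ _) (by omega)) hvan3
        exact hf1z (scaleT_eq_zero (by positivity) hf2)

/-- uniqueness up to a constant. Let `S` be the symmetric polynomial of
total degree `|ν|` representing the q²-factorial Schur polynomial `𝔰_ν(·; q²)`, i.e.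
`S · ∏_{i<j}(X_i − X_j) = det( ∏_{m=0}^{ν_j+n−j−1} (X_i − (q²)^m) )`.
If `p` is a symmetric polynomial of total degree at most `|ν|` vanishing at all points
`q^{2(μ+δ)}` for partitions `μ` with `|μ| ≤ |ν|`, `μ ≠ ν`, then `p = c • S` for some
constant `c ∈ ℝ`. -/
theorem qfactSchur_unique_up_to_constant (n : ℕ) (hn : 1 ≤ n) (q : ℝ)
    (hq0 : 0 < q) (hq1 : q < 1) (ν : Fin n → ℕ) (hν : Antitone ν)
    (S : MvPolynomial (Fin n) ℝ)
    (hS : S * ∏ i : Fin n, ∏ j ∈ Finset.Ioi i, (X i - X j) =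
        Matrix.det (Matrix.of fun i j : Fin n =>
          ∏ m ∈ Finset.range (ν j + (n - 1 - (j : ℕ))), (X i - C ((q ^ 2) ^ m))))
    (hSsym : S.IsSymmetric) (hSdeg : S.totalDegree = ∑ i, ν i)
    (p : MvPolynomial (Fin n) ℝ) (hpsym : p.IsSymmetric)
    (hpdeg : p.totalDegree ≤ ∑ i, ν i)
    (hvanish : ∀ μ : Fin n → ℕ, Antitone μ → ∑ i, μ i ≤ ∑ i, ν i → μ ≠ ν →
        eval (qPoint n q μ) p = 0) :
    ∃ c : ℝ, p = c • S := by
  have hevalS : ∀ μ : Fin n → ℕ,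
      eval (qPoint n q μ) S *
        (∏ i : Fin n, ∏ j ∈ Finset.Ioi i, (qPoint n q μ i - qPoint n q μ j))
      = Matrix.det (Matrix.of fun i j : Fin n =>
          ∏ m ∈ Finset.range (ν j + (n - 1 - (j : ℕ))), (qPoint n q μ i - (q ^ 2) ^ m)) := by
    intro μ
    have h1 := congrArg (eval (qPoint n q μ)) hS
    rw [map_mul, RingHom.map_det, RingHom.mapMatrix_apply] at h1
    have h2 : eval (qPoint n q μ) (∏ i : Fin n, ∏ j ∈ Finset.Ioi i, (X i - X j))
        = ∏ i : Fin n, ∏ j ∈ Finset.Ioi i, (qPoint n q μ i - qPoint n q μ j) := by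
      rw [map_prod]
      refine Finset.prod_congr rfl fun i _ => ?_
      rw [map_prod]
      exact Finset.prod_congr rfl fun j _ => by rw [map_sub, eval_X, eval_X]
    have h3 : (Matrix.of fun i j : Fin n =>
          ∏ m ∈ Finset.range (ν j + (n - 1 - (j : ℕ))), (X i - C ((q ^ 2) ^ m))).map
            (eval (qPoint n q μ))
        = Matrix.of fun i j : Fin n =>
          ∏ m ∈ Finset.range (ν j + (n - 1 - (j : ℕ))), (qPoint n q μ i - (q ^ 2) ^ m) := by
      ext i j
      rw [Matrix.map_apply]
      show eval (qPoint n q μ) (∏ m ∈ Finset.range (ν j + (n - 1 - (j : ℕ))),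
        (X i - C ((q ^ 2) ^ m))) = _
      rw [map_prod]
      exact Finset.prod_congr rfl fun m _ => by rw [map_sub, eval_X, eval_C]
    rw [h2, h3] at h1
    exact h1
  have hxne : eval (qPoint n q ν) S ≠ 0 := by
    intro h0
    have h1 := hevalS ν
    rw [h0, zero_mul] at h1
    exact myDetNonzero hq0 hq1 ν hν h1.symm
  set c := eval (qPoint n q ν) p / eval (qPoint n q ν) S with hc
  refine ⟨c, ?_⟩
  have hkey : p - c • S = 0 := by
    refine myKey q hq0 hq1 (n + ∑ i, ν i) n (∑ i, ν i) (p - c • S) le_rfl ?_ ?_ ?_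
    · intro e
      rw [map_sub, map_smul, hpsym e, hSsym e]
    · have h1 : (-(c • S)) = (-c) • S := by rw [neg_smul]
      calc (p - c • S).totalDegree = (p + -(c • S)).totalDegree := by rw [sub_eq_add_neg]
      _ ≤ max p.totalDegree (-(c • S)).totalDegree := totalDegree_add _ _
      _ ≤ ∑ i, ν i := max_le hpdeg (by
            rw [h1]
            exact (totalDegree_smul_le _ _).trans (le_of_eq hSdeg))
    · intro μ hμ hsum
      rw [map_sub, smul_eval]
      by_cases hμν : μ = ν
      · subst hμν
        rw [hc, div_mul_cancel₀ _ hxne, sub_self]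
      · have hp0 := hvanish μ hμ hsum hμν
        have hS0 : eval (qPoint n q μ) S = 0 := by
          have hex : ∃ k, μ k < ν k := by
            by_contra hcon
            push_neg at hcon
            obtain ⟨k, hk⟩ := Function.ne_iff.mp hμν
            have hlt : ν k < μ k := lt_of_le_of_ne (hcon k) (Ne.symm hk)
            have hstrict : ∑ i, ν i < ∑ i, μ i :=
              Finset.sum_lt_sum (fun i _ => hcon i) ⟨k, Finset.mem_univ k, hlt⟩
            omega
          obtain ⟨k, hk⟩ := hex
          have hdet0 := myDetVanish (q := q) μ ν hμ hν k hk
          have h2 := hevalS μ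
          rw [hdet0] at h2
          exact (mul_eq_zero.mp h2).resolve_right (myVandNe hq0 hq1 μ hμ)
        rw [hp0, hS0, mul_zero, sub_zero]
  exact sub_eq_zero.mp hkey
end
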